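/- Let V ⊂ ℝ be open, k ≥ 1, and f ∈ C^k(V) with |∂^β f| ≤ A₁ on V for all orders β ≤ k and |f^{(k)}(x)| ≥ A₂ for all x ∈ V. Then for any open interval B ⊂ V and any ε > 0, |{x ∈ B : |f(x)| < ε}| ≤ C_{k,A₁,A₂} · (ε / sup_{x∈B}|f(x)|)^{1/k} · |B|, where C_{k,A₁,A₂} = k(k+1)·((A₁/A₂)(k+1)(2k^k+1))^{1/k}. -/

import Mathlib

open MeasureTheory Set Polynomial


lemma idw_open {f : ℝ → ℝ} {s : Set ℝ} (n : ℕ) (hs : IsOpen s) {x : ℝ} (hx : x ∈ s) :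
    iteratedDerivWithin n f s x = iteratedDeriv n f x := by
  rw [iteratedDerivWithin_eq_iteratedFDerivWithin, iteratedDeriv_eq_iteratedFDeriv,
    iteratedFDerivWithin_of_isOpen n hs hx]

lemma iteratedDeriv_polyeval (n : ℕ) : ∀ (r : ℝ[X]),
    iteratedDeriv n (fun x => r.eval x) = fun x => (Polynomial.derivative^[n] r).eval x := by
  induction n with
  | zero => simp
  | succ n ih =>
    intro r
    rw [iteratedDeriv_succ']
    have : deriv (fun x => r.eval x) = fun x => r.derivative.eval x := by
      funext z; exact r.deriv
    rw [this, ih, Function.iterate_succ_apply]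

lemma iter_rolle : ∀ (n : ℕ) (a b : ℝ) (g : ℝ → ℝ), ContDiffOn ℝ n g (Set.Ioo a b) →
    ∀ (x : Fin (n+1) → ℝ), StrictMono x → (∀ i, x i ∈ Set.Ioo a b) → (∀ i, g (x i) = 0) →
    ∃ ξ ∈ Set.Ioo a b, iteratedDeriv n g ξ = 0 := by
  intro n
  induction n with
  | zero =>
    intro a b g _ x _ hmem hz
    exact ⟨x 0, hmem 0, by simpa [iteratedDeriv_zero] using hz 0⟩
  | succ n ih =>
    intro a b g hg x hmono hmem hz
    have hrolle : ∀ i : Fin (n+1), ∃ c ∈ Set.Ioo (x i.castSucc) (x i.succ), deriv g c = 0 := by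
      intro i
      have hab : x i.castSucc < x i.succ := hmono Fin.castSucc_lt_succ
      have hsub : Set.Icc (x i.castSucc) (x i.succ) ⊆ Set.Ioo a b :=
        Set.Icc_subset_Ioo (hmem i.castSucc).1 (hmem i.succ).2
      exact exists_deriv_eq_zero hab (hg.continuousOn.mono hsub)
        ((hz i.castSucc).trans (hz i.succ).symm)
    choose y hy hy0 using hrolle
    have hymem : ∀ i, y i ∈ Set.Ioo a b := fun i =>
      ⟨lt_trans (hmem i.castSucc).1 (hy i).1, lt_trans (hy i).2 (hmem i.succ).2⟩
    have hymono : StrictMono y := by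
      intro i j hij
      have h1 : (y i) < x i.succ := (hy i).2
      have h2 : x j.castSucc < y j := (hy j).1
      have h3 : x i.succ ≤ x j.castSucc := by
        apply hmono.monotone
        have := hij
        rw [Fin.lt_def] at this
        rw [Fin.le_def]
        simp only [Fin.val_succ, Fin.coe_castSucc]
        omega
      linarith
    have hg' : ContDiffOn ℝ n (deriv g) (Set.Ioo a b) := by
      apply hg.deriv_of_isOpen isOpen_Ioo
      exact_mod_cast le_of_eq (by norm_cast)
    obtain ⟨ξ, hξ, h0⟩ := ih a b (deriv g) hg' y hymono hymem hy0
    exact ⟨ξ, hξ, by rw [iteratedDeriv_succ']; exact h0⟩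

lemma poly_contDiff (r : ℝ[X]) {n : WithTop ℕ∞} : ContDiff ℝ n (fun x => r.eval x) := by
  induction r using Polynomial.induction_on' with
  | add p q hp hq => simp only [eval_add]; exact hp.add hq
  | monomial k c =>
    simp only [eval_monomial]
    exact contDiff_const.mul (contDiff_id.pow k)

lemma key_poly (k : ℕ) (f : ℝ → ℝ) (a b : ℝ) (hf : ContDiffOn ℝ k f (Set.Ioo a b))
    (r : ℝ[X]) (hr : r.natDegree ≤ k)
    (x : Fin (k+1) → ℝ) (hmono : StrictMono x) (hmem : ∀ i, x i ∈ Set.Ioo a b)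
    (hval : ∀ i, f (x i) = r.eval (x i)) :
    ∃ ξ ∈ Set.Ioo a b, iteratedDeriv k f ξ = (Nat.factorial k : ℝ) * r.coeff k := by
  set φ : ℝ → ℝ := fun t => r.eval t with hφ
  have hφc : ContDiffOn ℝ k φ (Set.Ioo a b) := (poly_contDiff r).contDiffOn
  obtain ⟨ξ, hξ, h0⟩ := iter_rolle k a b (f - φ) (hf.sub hφc) x hmono hmem
    (fun i => by simp [hφ, hval i])
  refine ⟨ξ, hξ, ?_⟩
  have hsub : iteratedDeriv k (f - φ) ξ = iteratedDeriv k f ξ - iteratedDeriv k φ ξ := by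
    rw [← idw_open k isOpen_Ioo hξ, ← idw_open (f := f) k isOpen_Ioo hξ,
      ← idw_open (f := φ) k isOpen_Ioo hξ]
    exact iteratedDerivWithin_sub hξ (isOpen_Ioo.uniqueDiffOn) (hf ξ hξ) (hφc ξ hξ)
  have hφd : iteratedDeriv k φ ξ = (Nat.factorial k : ℝ) * r.coeff k := by
    rw [hφ, iteratedDeriv_polyeval]
    have hdeg : (Polynomial.derivative^[k] r).natDegree ≤ 0 := by
      have := r.natDegree_iterate_derivative k
      omega
    rw [Polynomial.eq_C_of_natDegree_le_zero hdeg]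
    simp [Polynomial.coeff_iterate_derivative, Nat.descFactorial_self, nsmul_eq_mul]
  rw [hsub, hφd] at h0
  linarith

lemma exists_points (E : Set ℝ) (hE : MeasurableSet E) (a b : ℝ) (hEsub : E ⊆ Set.Ioo a b)
    (k : ℕ) (h : ℝ) (hh : 0 < h)
    (hvol : ENNReal.ofReal ((2*k+2)*h) ≤ volume E) :
    ∃ x : Fin (k+1) → ℝ, (∀ i, x i ∈ E) ∧ ∀ i j : Fin (k+1), i < j → x i + h ≤ x j := by
  have hab : a < b := by
    by_contra hc
    push_neg at hc
    have : E = ∅ := by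
      rw [← Set.subset_empty_iff, ← Set.Ioo_eq_empty (not_lt.mpr hc)]
      exact hEsub
    rw [this, measure_empty] at hvol
    have : (0:ℝ) < (2*k+2)*h := by positivity
    simp [ENNReal.ofReal_eq_zero, le_zero_iff] at hvol
    linarith
  have hfin : volume E ≠ ⊤ := by
    refine ne_top_of_le_ne_top ?_ (measure_mono hEsub)
    simp [Real.volume_Ioo]
  set m := (volume E).toReal with hm_def
  have hm : (2*k+2)*h ≤ m := (ENNReal.ofReal_le_iff_le_toReal hfin).mp hvol
  set F : ℝ → ℝ := fun t => (volume (E ∩ Set.Iic t)).toReal with hF_def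
  have hFfin : ∀ t, volume (E ∩ Set.Iic t) ≠ ⊤ :=
    fun t => ne_top_of_le_ne_top hfin (measure_mono Set.inter_subset_left)
  have hFmono : Monotone F := by
    intro s t hst
    exact ENNReal.toReal_mono (hFfin t)
      (measure_mono (Set.inter_subset_inter_right _ (Set.Iic_subset_Iic.mpr hst)))
  have hFadd : ∀ s t : ℝ, s ≤ t → F t = F s + (volume (E ∩ Set.Ioc s t)).toReal := by
    intro s t hst
    have hsplit : E ∩ Set.Iic t = (E ∩ Set.Iic s) ∪ (E ∩ Set.Ioc s t) := by
      ext z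
      simp only [Set.mem_inter_iff, Set.mem_Iic, Set.mem_union, Set.mem_Ioc]
      constructor
      · rintro ⟨h1, h2⟩
        rcases le_or_gt z s with hz | hz
        · exact Or.inl ⟨h1, hz⟩
        · exact Or.inr ⟨h1, hz, h2⟩
      · rintro (⟨h1, h2⟩ | ⟨h1, h2⟩)
        · exact ⟨h1, h2.trans hst⟩
        · exact ⟨h1, h2.2⟩
    have hdisj : Disjoint (E ∩ Set.Iic s) (E ∩ Set.Ioc s t) := by
      refine Set.disjoint_of_subset Set.inter_subset_right Set.inter_subset_right ?_
      exact Set.Iic_disjoint_Ioc le_rfl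
    have : volume (E ∩ Set.Iic t) = volume (E ∩ Set.Iic s) + volume (E ∩ Set.Ioc s t) := by
      rw [hsplit, measure_union hdisj (hE.inter measurableSet_Ioc)]
    simp only [hF_def]
    rw [this, ENNReal.toReal_add (hFfin s) (ne_top_of_le_ne_top hfin
      (measure_mono Set.inter_subset_left))]
  have hIocReal : ∀ s t : ℝ, s ≤ t → (volume (E ∩ Set.Ioc s t)).toReal ≤ t - s := by
    intro s t hst
    have h1 : volume (E ∩ Set.Ioc s t) ≤ ENNReal.ofReal (t - s) := by
      refine le_trans (measure_mono Set.inter_subset_right) ?_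
      rw [Real.volume_Ioc]
    calc (volume (E ∩ Set.Ioc s t)).toReal ≤ (ENNReal.ofReal (t-s)).toReal :=
          ENNReal.toReal_mono ENNReal.ofReal_ne_top h1
      _ = t - s := ENNReal.toReal_ofReal (by linarith)
  have hlip : ∀ s t : ℝ, s ≤ t → F t - F s ≤ t - s := by
    intro s t hst
    rw [hFadd s t hst]
    have := hIocReal s t hst
    linarith
  have hFcont : Continuous F := by
    have : LipschitzWith 1 F := by
      refine LipschitzWith.of_dist_le_mul ?_
      intro s t
      rw [Real.dist_eq, Real.dist_eq, NNReal.coe_one, one_mul]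
      rcases le_total s t with hst | hst
      · have h1 := hlip s t hst
        have h2 := hFmono hst
        rw [abs_sub_comm, abs_of_nonneg (by linarith), abs_of_nonpos (by linarith)]
        linarith
      · have h1 := hlip t s hst
        have h2 := hFmono hst
        rw [abs_of_nonneg (by linarith), abs_of_nonneg (by linarith)]
        linarith
    exact this.continuous
  have hFa : F a = 0 := by
    have : E ∩ Set.Iic a = ∅ := by
      apply Set.eq_empty_of_forall_notMem
      rintro z ⟨hz1, hz2⟩
      exact absurd hz2 (not_le.mpr (hEsub hz1).1)
    simp [hF_def, this]
  have hFb : F b = m := by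
    have : E ∩ Set.Iic b = E := Set.inter_eq_left.mpr (fun z hz => le_of_lt (hEsub hz).2)
    simp [hF_def, this, hm_def]
  have hIVT : ∀ c : ℝ, 0 ≤ c → c ≤ m → ∃ t, F t = c := by
    intro c h1 h2
    have hmem : c ∈ Set.Icc (F a) (F b) := by rw [hFa, hFb]; exact ⟨h1, h2⟩
    obtain ⟨t, _, ht⟩ := intermediate_value_Icc hab.le hFcont.continuousOn hmem
    exact ⟨t, ht⟩
  have hpick : ∀ i : ℕ, i ≤ k → ∃ z, z ∈ E ∧ 2*i*h ≤ F z ∧ F z ≤ (2*i+1)*h := by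
    intro i hi
    have hik : (i:ℝ) ≤ (k:ℝ) := Nat.cast_le.mpr hi
    obtain ⟨t₁, ht₁⟩ := hIVT (2*i*h) (by positivity) (by nlinarith)
    obtain ⟨t₂, ht₂⟩ := hIVT ((2*i+1)*h) (by positivity) (by nlinarith)
    have h12 : t₁ < t₂ := by
      by_contra hc
      push_neg at hc
      have := hFmono hc
      rw [ht₁, ht₂] at this
      nlinarith
    have hpos : volume (E ∩ Set.Ioc t₁ t₂) ≠ 0 := by
      intro h0
      have := hFadd t₁ t₂ h12.le
      rw [ht₁, ht₂, h0] at this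
      simp at this
      nlinarith
    obtain ⟨z, hz⟩ := MeasureTheory.nonempty_of_measure_ne_zero hpos
    refine ⟨z, hz.1, ?_, ?_⟩
    · rw [← ht₁]; exact hFmono (le_of_lt hz.2.1)
    · rw [← ht₂]; exact hFmono hz.2.2
  choose g hg1 hg2 hg3 using fun i : Fin (k+1) => hpick i.val (by omega)
  refine ⟨g, hg1, ?_⟩
  intro i j hij
  have hij1 : (i : ℕ) + 1 ≤ (j : ℕ) := hij
  have hijR : (i : ℝ) + 1 ≤ (j : ℝ) := by exact_mod_cast hij1
  have h1 : F (g i) + h ≤ F (g j) := by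
    have hgi := hg3 i
    have hgj := hg2 j
    nlinarith
  have hij' : g i ≤ g j := by
    by_contra hc
    push_neg at hc
    have := hFmono hc.le
    linarith
  have := hlip (g i) (g j) hij'
  linarith

lemma step1 (k : ℕ) (f : ℝ → ℝ) (a b : ℝ) (hfI : ContDiffOn ℝ k f (Set.Ioo a b))
    (x : Fin (k+1) → ℝ) (hmono : StrictMono x) (hxI : ∀ i, x i ∈ Set.Ioo a b)
    (ε h A₂ : ℝ) (hε : 0 < ε) (hh : 0 < h)
    (hxf : ∀ i, |f (x i)| < ε)
    (hgap' : ∀ i j : Fin (k+1), i ≠ j → h ≤ |x i - x j|)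
    (hDge : ∀ y ∈ Set.Ioo a b, A₂ ≤ |iteratedDeriv k f y|) :
    A₂ * h^k ≤ ((k:ℝ)+1) * (Nat.factorial k : ℝ) * ε := by
  have hinj : Set.InjOn x (Finset.univ : Finset (Fin (k+1))) := hmono.injective.injOn
  set q := Lagrange.interpolate Finset.univ x (f ∘ x) with hq_def
  have hqdeg : q.natDegree ≤ k := by
    have hd := Lagrange.degree_interpolate_lt (r := f ∘ x) hinj
    simp only [Finset.card_univ, Fintype.card_fin] at hd
    by_cases hq : q = 0
    · simp [hq]
    · have := (Polynomial.natDegree_lt_iff_degree_lt hq).mpr (by exact_mod_cast hd)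
      omega
  obtain ⟨ξ, hξ, hD⟩ := key_poly k f a b hfI q hqdeg x hmono hxI
    (fun i => (Lagrange.eval_interpolate_at_node (f ∘ x) hinj (Finset.mem_univ i)).symm)
  have hbc : ∀ i : Fin (k+1),
      (Lagrange.basis Finset.univ x i).coeff k = ∏ j ∈ Finset.univ.erase i, (x i - x j)⁻¹ := by
    intro i
    have hdeg := Lagrange.natDegree_basis hinj (Finset.mem_univ i)
    simp only [Finset.card_univ, Fintype.card_fin, Nat.add_sub_cancel] at hdeg
    rw [show ((Lagrange.basis Finset.univ x i).coeff k)
        = (Lagrange.basis Finset.univ x i).leadingCoeff by rw [Polynomial.leadingCoeff, hdeg]]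
    unfold Lagrange.basis
    rw [Polynomial.leadingCoeff_prod]
    refine Finset.prod_congr rfl fun j hj => ?_
    unfold Lagrange.basisDivisor
    rw [Polynomial.leadingCoeff_mul, Polynomial.leadingCoeff_C,
      Polynomial.leadingCoeff_X_sub_C, mul_one]
  have hbcb : ∀ i : Fin (k+1), |(Lagrange.basis Finset.univ x i).coeff k| ≤ h⁻¹ ^ k := by
    intro i
    rw [hbc i, Finset.abs_prod]
    have hcard : (Finset.univ.erase i).card = k := by
      rw [Finset.card_erase_of_mem (Finset.mem_univ i)]
      simp
    calc (∏ j ∈ Finset.univ.erase i, |(x i - x j)⁻¹|)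
        ≤ ∏ j ∈ Finset.univ.erase i, h⁻¹ := by
          refine Finset.prod_le_prod (fun j _ => abs_nonneg _) (fun j hj => ?_)
          rw [abs_inv]
          exact inv_anti₀ hh (hgap' i j (Finset.ne_of_mem_erase hj).symm)
      _ = h⁻¹ ^ k := by rw [Finset.prod_const, hcard]
  have hqc : |q.coeff k| ≤ ((k:ℝ)+1) * ε * h⁻¹ ^ k := by
    have hsum : q.coeff k = ∑ i, (f (x i)) * (Lagrange.basis Finset.univ x i).coeff k := by
      rw [hq_def, Lagrange.interpolate_apply, Polynomial.finset_sum_coeff]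
      exact Finset.sum_congr rfl fun i _ => by rw [Polynomial.coeff_C_mul]; rfl
    rw [hsum]
    calc |∑ i, (f (x i)) * (Lagrange.basis Finset.univ x i).coeff k|
        ≤ ∑ i, |f (x i)| * |(Lagrange.basis Finset.univ x i).coeff k| := by
          refine le_trans (Finset.abs_sum_le_sum_abs _ _) ?_
          exact le_of_eq (Finset.sum_congr rfl fun i _ => abs_mul _ _)
      _ ≤ ∑ _i : Fin (k+1), ε * h⁻¹ ^ k := by
          refine Finset.sum_le_sum fun i _ => ?_
          exact mul_le_mul (le_of_lt (hxf i)) (hbcb i) (abs_nonneg _) hε.le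
      _ = ((k:ℝ)+1) * (ε * h⁻¹ ^ k) := by
          rw [Finset.sum_const, Finset.card_univ, Fintype.card_fin, nsmul_eq_mul]
          push_cast
          ring
      _ = ((k:ℝ)+1) * ε * h⁻¹ ^ k := by ring
  have hA2 : A₂ ≤ (Nat.factorial k : ℝ) * (((k:ℝ)+1) * ε * h⁻¹ ^ k) := by
    have := hDge ξ hξ
    rw [hD, abs_mul, abs_of_nonneg (by positivity : (0:ℝ) ≤ (Nat.factorial k : ℝ))] at this
    refine le_trans this ?_
    exact mul_le_mul_of_nonneg_left hqc (by positivity)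
  have hhk : (0:ℝ) < h ^ k := by positivity
  have := mul_le_mul_of_nonneg_right hA2 hhk.le
  calc A₂ * h ^ k ≤ (Nat.factorial k : ℝ) * (((k:ℝ)+1) * ε * h⁻¹ ^ k) * h ^ k := this
    _ = ((k:ℝ)+1) * (Nat.factorial k : ℝ) * ε * (h⁻¹ ^ k * h ^ k) := by ring
    _ = ((k:ℝ)+1) * (Nat.factorial k : ℝ) * ε := by
        rw [← mul_pow, inv_mul_cancel₀ hh.ne', one_pow, mul_one]

lemma step2 (k : ℕ) (hk : 1 ≤ k) (f : ℝ → ℝ) (a b : ℝ)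
    (hfI : ContDiffOn ℝ k f (Set.Ioo a b))
    (xs : Fin k → ℝ) (hmono : StrictMono xs) (hxI : ∀ i, xs i ∈ Set.Ioo a b)
    (ε h A₁ : ℝ) (hε : 0 < ε) (hh : 0 < h) (hhL : h ≤ b - a) (hA₁ : 0 ≤ A₁)
    (hxf : ∀ i, |f (xs i)| < ε)
    (hgap' : ∀ i j : Fin k, i ≠ j → h ≤ |xs i - xs j|)
    (hDle : ∀ y ∈ Set.Ioo a b, |iteratedDeriv k f y| ≤ A₁)
    (y : ℝ) (hy : y ∈ Set.Ioo a b) :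
    |f y| ≤ ε * k * ((b-a)/h)^(k-1) + A₁ * (b-a)^k / (Nat.factorial k : ℝ) := by
  have hL : (0:ℝ) < b - a := by linarith [hy.1, hy.2]
  have hBh : (1:ℝ) ≤ (b-a)/h := (one_le_div hh).mpr hhL
  have hfirst : (1:ℝ) ≤ (k:ℝ) * ((b-a)/h)^(k-1) := by
    have h1 : (1:ℝ) ≤ ((b-a)/h)^(k-1) := one_le_pow₀ hBh
    have h2 : (1:ℝ) ≤ (k:ℝ) := by exact_mod_cast hk
    nlinarith
  have hyd : ∀ z ∈ Set.Ioo a b, |y - z| ≤ b - a := by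
    intro z hz
    rw [abs_le]
    constructor <;> [skip; skip] <;> · have := hy.1; have := hy.2; have := hz.1; have := hz.2; linarith
  have hAterm : 0 ≤ A₁ * (b-a)^k / (Nat.factorial k : ℝ) := by positivity
  by_cases hyn : ∃ i, y = xs i
  · obtain ⟨i, rfl⟩ := hyn
    have h1 : |f (xs i)| < ε := hxf i
    have h2 : ε ≤ ε * ((k:ℝ) * ((b-a)/h)^(k-1)) := le_mul_of_one_le_right hε.le hfirst
    calc |f (xs i)| ≤ ε * ((k:ℝ) * ((b-a)/h)^(k-1)) := le_trans h1.le h2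
      _ = ε * (k:ℝ) * ((b-a)/h)^(k-1) := by ring
      _ ≤ _ := by linarith
  push_neg at hyn
  have hinj : Set.InjOn xs (Finset.univ : Finset (Fin k)) := hmono.injective.injOn
  set p := Lagrange.interpolate Finset.univ xs (f ∘ xs) with hp_def
  have hpd : p.degree < (k : WithBot ℕ) := by
    have hd := Lagrange.degree_interpolate_lt (r := f ∘ xs) hinj
    simp only [Finset.card_univ, Fintype.card_fin] at hd
    exact hd
  -- bound on |p.eval y|
  have hpeval : |p.eval y| ≤ ε * (k:ℝ) * ((b-a)/h)^(k-1) := by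
    have hbase : ∀ i : Fin k, |(Lagrange.basis Finset.univ xs i).eval y| ≤ ((b-a)/h)^(k-1) := by
      intro i
      unfold Lagrange.basis
      rw [Polynomial.eval_prod, Finset.abs_prod]
      have hcard : (Finset.univ.erase i).card = k - 1 := by
        rw [Finset.card_erase_of_mem (Finset.mem_univ i)]
        simp
      calc (∏ j ∈ Finset.univ.erase i, |(Lagrange.basisDivisor (xs i) (xs j)).eval y|)
          ≤ ∏ j ∈ Finset.univ.erase i, ((b-a)/h) := by
            refine Finset.prod_le_prod (fun j _ => abs_nonneg _) (fun j hj => ?_)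
            unfold Lagrange.basisDivisor
            rw [Polynomial.eval_mul, Polynomial.eval_C, Polynomial.eval_sub,
              Polynomial.eval_X, Polynomial.eval_C, abs_mul, abs_inv]
            have hne : i ≠ j := (Finset.ne_of_mem_erase hj).symm
            have h1 : |xs i - xs j|⁻¹ ≤ h⁻¹ := inv_anti₀ hh (hgap' i j hne)
            have h2 : |y - xs j| ≤ b - a := hyd (xs j) (hxI j)
            calc |xs i - xs j|⁻¹ * |y - xs j| ≤ h⁻¹ * (b-a) :=
                  mul_le_mul h1 h2 (abs_nonneg _) (by positivity)
              _ = (b-a)/h := by rw [div_eq_inv_mul]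
        _ = ((b-a)/h)^(k-1) := by rw [Finset.prod_const, hcard]
    rw [hp_def, Lagrange.interpolate_apply, Polynomial.eval_finset_sum]
    calc |∑ i, ((Polynomial.C ((f ∘ xs) i)) * Lagrange.basis Finset.univ xs i).eval y|
        ≤ ∑ i, |((Polynomial.C ((f ∘ xs) i)) * Lagrange.basis Finset.univ xs i).eval y| :=
          Finset.abs_sum_le_sum_abs _ _
      _ ≤ ∑ _i : Fin k, ε * ((b-a)/h)^(k-1) := by
          refine Finset.sum_le_sum fun i _ => ?_
          rw [Polynomial.eval_mul, Polynomial.eval_C, abs_mul]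
          exact mul_le_mul (hxf i).le (hbase i) (abs_nonneg _) hε.le
      _ = (k:ℝ) * (ε * ((b-a)/h)^(k-1)) := by
          rw [Finset.sum_const, Finset.card_univ, Fintype.card_fin, nsmul_eq_mul]
      _ = ε * (k:ℝ) * ((b-a)/h)^(k-1) := by ring
  set N := ∏ j : Fin k, (y - xs j) with hN_def
  have hN : N ≠ 0 := by
    rw [hN_def]
    exact Finset.prod_ne_zero_iff.mpr fun j _ => sub_ne_zero.mpr (hyn j)
  have hNb : |N| ≤ (b-a)^k := by
    rw [hN_def, Finset.abs_prod]
    calc (∏ j : Fin k, |y - xs j|) ≤ ∏ _j : Fin k, (b-a) :=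
          Finset.prod_le_prod (fun j _ => abs_nonneg _) (fun j _ => hyd (xs j) (hxI j))
      _ = (b-a)^k := by rw [Finset.prod_const, Finset.card_univ, Fintype.card_fin]
  set lam := (f y - p.eval y) / N with hlam_def
  set P : Polynomial ℝ := ∏ j : Fin k, (Polynomial.X - Polynomial.C (xs j)) with hP_def
  have hPmon : P.Monic := monic_prod_of_monic _ _ fun j _ => monic_X_sub_C _
  have hPdeg : P.natDegree = k := by
    rw [hP_def, Polynomial.natDegree_prod _ _ (fun j _ => Polynomial.X_sub_C_ne_zero _)]
    simp [Polynomial.natDegree_X_sub_C]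
  set r := p + Polynomial.C lam * P with hr_def
  have hrdeg : r.natDegree ≤ k := by
    refine le_trans (Polynomial.natDegree_add_le _ _) (max_le ?_ ?_)
    · exact Polynomial.natDegree_le_iff_degree_le.mpr (le_of_lt hpd)
    · exact le_trans (Polynomial.natDegree_C_mul_le _ _) (le_of_eq hPdeg)
  have hrc : r.coeff k = lam := by
    rw [hr_def, Polynomial.coeff_add, Polynomial.coeff_eq_zero_of_degree_lt hpd,
      Polynomial.coeff_C_mul, zero_add]
    have : P.coeff k = 1 := by
      rw [← hPdeg]
      exact hPmon.coeff_natDegree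
    rw [this, mul_one]
  have hvaly : f y = r.eval y := by
    rw [hr_def, Polynomial.eval_add, Polynomial.eval_mul, Polynomial.eval_C]
    have hPy : P.eval y = N := by
      rw [hP_def, Polynomial.eval_prod, hN_def]
      exact Finset.prod_congr rfl fun j _ => by
        rw [Polynomial.eval_sub, Polynomial.eval_X, Polynomial.eval_C]
    rw [hPy, hlam_def, div_mul_cancel₀ _ hN]
    ring
  have hvalxs : ∀ i : Fin k, f (xs i) = r.eval (xs i) := by
    intro i
    rw [hr_def, Polynomial.eval_add, Polynomial.eval_mul, Polynomial.eval_C]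
    have hPxs : P.eval (xs i) = 0 := by
      rw [hP_def, Polynomial.eval_prod]
      exact Finset.prod_eq_zero (Finset.mem_univ i) (by
        rw [Polynomial.eval_sub, Polynomial.eval_X, Polynomial.eval_C, sub_self])
    rw [hPxs, mul_zero, add_zero, hp_def]
    exact (Lagrange.eval_interpolate_at_node (f ∘ xs) hinj (Finset.mem_univ i)).symm
  -- assemble the k+1 zeros
  set s : Finset ℝ := insert y (Finset.image xs Finset.univ) with hs_def
  have hynotim : y ∉ Finset.image xs Finset.univ := by
    simp only [Finset.mem_image, Finset.mem_univ, true_and, not_exists]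
    exact fun i hi => (hyn i) hi.symm
  have hcard : s.card = k + 1 := by
    rw [hs_def, Finset.card_insert_of_notMem hynotim,
      Finset.card_image_of_injective _ hmono.injective, Finset.card_univ, Fintype.card_fin]
  have hsmem : ∀ w ∈ s, w ∈ Set.Ioo a b ∧ f w = r.eval w := by
    intro w hw
    rw [hs_def, Finset.mem_insert] at hw
    rcases hw with rfl | hw
    · exact ⟨hy, hvaly⟩
    · obtain ⟨i, _, rfl⟩ := Finset.mem_image.mp hw
      exact ⟨hxI i, hvalxs i⟩
  set e := s.orderIsoOfFin hcard with he_def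
  set z : Fin (k+1) → ℝ := fun i => (e i : ℝ) with hz_def
  have hzmono : StrictMono z := fun i j hij => by
    exact_mod_cast e.strictMono hij
  have hzs : ∀ i, z i ∈ s := fun i => (e i).2
  obtain ⟨ξ, hξ, hD⟩ := key_poly k f a b hfI r hrdeg z hzmono
    (fun i => (hsmem _ (hzs i)).1) (fun i => (hsmem _ (hzs i)).2)
  have hlam_bound : |lam| ≤ A₁ / (Nat.factorial k : ℝ) := by
    have h1 := hDle ξ hξ
    rw [hD, hrc, abs_mul, abs_of_nonneg (by positivity : (0:ℝ) ≤ (Nat.factorial k : ℝ))] at h1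
    rw [le_div_iff₀ (by positivity : (0:ℝ) < (Nat.factorial k : ℝ))]
    linarith
  -- conclude
  have hfy : f y = p.eval y + lam * N := by
    have := hvaly
    rw [hlam_def]
    field_simp
    ring
  rw [hfy]
  calc |p.eval y + lam * N| ≤ |p.eval y| + |lam| * |N| := by
        refine le_trans (abs_add_le _ _) ?_
        rw [abs_mul]
      _ ≤ ε * (k:ℝ) * ((b-a)/h)^(k-1) + (A₁ / (Nat.factorial k : ℝ)) * (b-a)^k := by
        refine add_le_add hpeval ?_
        exact mul_le_mul hlam_bound hNb (abs_nonneg _) (by positivity)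
      _ = ε * (k:ℝ) * ((b-a)/h)^(k-1) + A₁ * (b-a)^k / (Nat.factorial k : ℝ) := by ring

lemma numk (k : ℕ) (hk : 1 ≤ k) : 2^k * (2*k+1) ≤ k^k * ((k+1) * (2*k^k+1)) := by
  rcases Nat.lt_or_ge k 2 with h2 | h2
  · interval_cases k
    · decide
  · have h1 : 2^k ≤ k^k := Nat.pow_le_pow_left h2 k
    have h3 : k ≤ k^k := Nat.le_self_pow (by omega) k
    calc 2^k * (2*k+1) ≤ k^k * (2*k+1) := Nat.mul_le_mul_right _ h1
      _ ≤ k^k * ((k+1) * (2*k^k+1)) := by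
          refine Nat.mul_le_mul_left _ ?_
          calc 2*k+1 ≤ 2*k^k+1 := by omega
            _ ≤ (k+1) * (2*k^k+1) := Nat.le_mul_of_pos_left _ (by omega)

lemma numkR (k : ℕ) (hk : 1 ≤ k) (t : ℝ) (ht : 1 ≤ t) :
    (2*(k:ℝ)+2)^k * ((k:ℝ) + t*((k:ℝ)+1)) ≤ ((k:ℝ)*((k:ℝ)+1))^k * (t * ((k:ℝ)+1) * (2*(k:ℝ)^k+1)) := by
  have hkR : (1:ℝ) ≤ (k:ℝ) := by exact_mod_cast hk
  have hnat : ((2:ℝ))^k * (2*(k:ℝ)+1) ≤ (k:ℝ)^k * (((k:ℝ)+1) * (2*(k:ℝ)^k+1)) := by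
    have := numk k hk
    have hcast : ((2^k * (2*k+1) : ℕ) : ℝ) ≤ ((k^k * ((k+1) * (2*k^k+1)) : ℕ) : ℝ) := by
      exact_mod_cast this
    push_cast at hcast
    convert hcast using 2 <;> ring
  have hstep : (k:ℝ) + t*((k:ℝ)+1) ≤ t * (2*(k:ℝ)+1) := by nlinarith
  have hpos1 : (0:ℝ) < (2*(k:ℝ)+2)^k := by positivity
  calc (2*(k:ℝ)+2)^k * ((k:ℝ) + t*((k:ℝ)+1))
      ≤ (2*(k:ℝ)+2)^k * (t * (2*(k:ℝ)+1)) := by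
        exact mul_le_mul_of_nonneg_left hstep hpos1.le
    _ = t * ((2*((k:ℝ)+1))^k * (2*(k:ℝ)+1)) := by ring_nf
    _ ≤ t * (((k:ℝ)*((k:ℝ)+1))^k * (((k:ℝ)+1) * (2*(k:ℝ)^k+1))) := by
        refine mul_le_mul_of_nonneg_left ?_ (by linarith)
        have e1 : (2*((k:ℝ)+1))^k = 2^k * ((k:ℝ)+1)^k := by rw [mul_pow]
        have e2 : ((k:ℝ)*((k:ℝ)+1))^k = (k:ℝ)^k * ((k:ℝ)+1)^k := by rw [mul_pow]
        rw [e1, e2]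
        have hp : (0:ℝ) ≤ ((k:ℝ)+1)^k := by positivity
        calc 2^k * ((k:ℝ)+1)^k * (2*(k:ℝ)+1) = ((k:ℝ)+1)^k * (2^k * (2*(k:ℝ)+1)) := by ring
          _ ≤ ((k:ℝ)+1)^k * ((k:ℝ)^k * (((k:ℝ)+1) * (2*(k:ℝ)^k+1))) :=
              mul_le_mul_of_nonneg_left hnat hp
          _ = (k:ℝ)^k * ((k:ℝ)+1)^k * (((k:ℝ)+1) * (2*(k:ℝ)^k+1)) := by ring
    _ = ((k:ℝ)*((k:ℝ)+1))^k * (t * ((k:ℝ)+1) * (2*(k:ℝ)^k+1)) := by rw [mul_pow]; ring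

set_option maxHeartbeats 1000000 in
/-- Lemma 3.3, case d = 1: Let `V ⊂ ℝ` be open, `k ≥ 1`, `f ∈ C^k(V)` with
`|∂^j f| ≤ A₁` on `V` for all `j ≤ k` and `|f^{(k)}| ≥ A₂` on `V`.  Then for any open
interval `B ⊂ V` and any `ε > 0`,
`|{x ∈ B : |f(x)| < ε}| ≤ C_{k,A₁,A₂} · (ε / sup_B |f|)^{1/k} · |B|`, where
`C_{k,A₁,A₂} = k(k+1)·((A₁/A₂)(k+1)(2k^k+1))^{1/k}`.  (The quotient `ε / sup_B |f|` is
taken in `ℝ≥0∞`, so that `ε/0 = ∞`.) -/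
theorem stmt9 (V : Set ℝ) (hV : IsOpen V) (k : ℕ) (hk : 1 ≤ k) (f : ℝ → ℝ)
    (hf : ContDiffOn ℝ k f V) (A₁ A₂ : ℝ) (hA₁ : 0 < A₁) (hA₂ : 0 < A₂)
    (hder_le : ∀ x ∈ V, ∀ j ≤ k, |iteratedDerivWithin j f V x| ≤ A₁)
    (hder_ge : ∀ x ∈ V, A₂ ≤ |iteratedDerivWithin k f V x|)
    (a b : ℝ) (hB : Set.Ioo a b ⊆ V) (ε : ℝ) (hε : 0 < ε) :
    volume {x ∈ Set.Ioo a b | |f x| < ε} ≤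
      ENNReal.ofReal ((k : ℝ) * (k + 1) * ((A₁ / A₂) * (k + 1) * (2 * k ^ k + 1)) ^ ((1 : ℝ) / k)) *
        (ENNReal.ofReal ε / ENNReal.ofReal (⨆ x ∈ Set.Ioo a b, |f x|)) ^ ((1 : ℝ) / k) *
        volume (Set.Ioo a b) := by
  set S := ⨆ x ∈ Set.Ioo a b, |f x| with hS_def
  set E := {x ∈ Set.Ioo a b | |f x| < ε} with hE_def
  by_cases hE0 : volume E = 0
  · rw [hE0]; exact zero_le
  have hEsub : E ⊆ Set.Ioo a b := fun x hx => hx.1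
  have hab : a < b := by
    obtain ⟨z, hz⟩ := MeasureTheory.nonempty_of_measure_ne_zero hE0
    exact lt_trans hz.1.1 hz.1.2
  obtain ⟨L, hL_def⟩ : ∃ L : ℝ, L = b - a := ⟨_, rfl⟩
  have hL : (0:ℝ) < L := by rw [hL_def]; linarith
  have hfinIoo : volume (Set.Ioo a b) ≠ ⊤ := by simp [Real.volume_Ioo]
  have hfin : volume E ≠ ⊤ := ne_top_of_le_ne_top hfinIoo (measure_mono hEsub)
  obtain ⟨m, hm_def⟩ : ∃ m : ℝ, m = (volume E).toReal := ⟨_, rfl⟩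
  have hm : 0 < m := hm_def ▸ ENNReal.toReal_pos hE0 hfin
  have hmL : m ≤ L := by
    have h1 : volume E ≤ volume (Set.Ioo a b) := measure_mono hEsub
    rw [Real.volume_Ioo] at h1
    rw [hm_def, hL_def]
    calc (volume E).toReal ≤ (ENNReal.ofReal (b-a)).toReal :=
          ENNReal.toReal_mono ENNReal.ofReal_ne_top h1
      _ = b - a := ENNReal.toReal_ofReal (by linarith)
  have hS0 : 0 ≤ S := Real.iSup_nonneg fun x => Real.iSup_nonneg fun _ => abs_nonneg _
  have hkR : (1:ℝ) ≤ (k:ℝ) := by exact_mod_cast hk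
  obtain ⟨W, hW_def⟩ : ∃ W : ℝ, W = (A₁/A₂) * ((k:ℝ)+1) * (2*(k:ℝ)^k+1) := ⟨_, rfl⟩
  have hWpos : (0:ℝ) < W := by
    rw [hW_def]
    have h1 : (0:ℝ) < A₁/A₂ := by positivity
    exact mul_pos (mul_pos h1 (by linarith)) (by positivity)
  have hCpos : (0:ℝ) < (k:ℝ) * ((k:ℝ)+1) * W ^ ((1:ℝ)/k) := by
    have h1 := Real.rpow_pos_of_pos hWpos ((1:ℝ)/k)
    have h2 : (0:ℝ) < (k:ℝ) := by linarith
    have h3 : (0:ℝ) < (k:ℝ)+1 := by linarith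
    exact mul_pos (mul_pos h2 h3) h1
  by_cases hSle : S ≤ 0
  · -- sup is 0, RHS is ∞
    have hSz : S = 0 := le_antisymm hSle hS0
    have hRtop : ENNReal.ofReal ((k : ℝ) * ((k:ℝ) + 1) * (((A₁/A₂) * ((k:ℝ)+1) * (2*(k:ℝ)^k+1)) ^ ((1 : ℝ) / k))) *
        (ENNReal.ofReal ε / ENNReal.ofReal S) ^ ((1 : ℝ) / k) * volume (Set.Ioo a b) = ⊤ := by
      rw [hSz, ENNReal.ofReal_zero, ENNReal.div_zero (by
        simp only [ne_eq, ENNReal.ofReal_eq_zero, not_le]; exact hε : ENNReal.ofReal ε ≠ 0)]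
      rw [ENNReal.top_rpow_of_pos (by positivity)]
      rw [ENNReal.mul_top (by
        simp only [ne_eq, ENNReal.ofReal_eq_zero, not_le]
        rw [← hW_def]; exact hCpos : ENNReal.ofReal ((k : ℝ) * ((k:ℝ) + 1) * (((A₁/A₂) * ((k:ℝ)+1) * (2*(k:ℝ)^k+1)) ^ ((1 : ℝ) / k))) ≠ 0)]
      rw [ENNReal.top_mul (by
        rw [Real.volume_Ioo]
        simp only [ne_eq, ENNReal.ofReal_eq_zero, not_le]
        linarith : volume (Set.Ioo a b) ≠ 0)]
    exact le_trans le_top (le_of_eq hRtop.symm)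
  push_neg at hSle
  -- the set E is measurable
  have hEmeas : MeasurableSet E := by
    have hEeq : E = Set.Ioo a b ∩ f ⁻¹' (Set.Ioo (-ε) ε) := by
      ext z
      simp only [hE_def, Set.mem_setOf_eq, Set.mem_inter_iff, Set.mem_preimage, Set.mem_Ioo,
        abs_lt]
    rw [hEeq]
    exact (ContinuousOn.isOpen_inter_preimage (hf.continuousOn.mono hB) isOpen_Ioo
      isOpen_Ioo).measurableSet
  -- choose points
  obtain ⟨h, hh_def⟩ : ∃ h : ℝ, h = m / (2*(k:ℝ)+2) := ⟨_, rfl⟩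
  have hhpos : 0 < h := by
    rw [hh_def]; positivity
  have hmh : m = (2*(k:ℝ)+2) * h := by
    rw [hh_def]; field_simp
  obtain ⟨x, hxE, hgap⟩ := exists_points E hEmeas a b hEsub k h hhpos (by
    rw [← hmh, hm_def, ENNReal.ofReal_toReal hfin])
  have hxI : ∀ i, x i ∈ Set.Ioo a b := fun i => hEsub (hxE i)
  have hxf : ∀ i, |f (x i)| < ε := fun i => (hxE i).2
  have hmono : StrictMono x := fun i j hij => by
    have := hgap i j hij; linarith
  have hgap' : ∀ i j : Fin (k+1), i ≠ j → h ≤ |x i - x j| := by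
    intro i j hij
    rcases lt_or_gt_of_ne hij with hlt | hlt
    · have := hgap i j hlt
      rw [abs_sub_comm, abs_of_nonneg (by linarith)]
      linarith
    · have := hgap j i hlt
      rw [abs_of_nonneg (by linarith)]
      linarith
  have hhL : h ≤ L := by
    have : h ≤ m := by
      rw [hh_def]
      rw [div_le_iff₀ (by positivity)]
      nlinarith
    linarith
  -- derivative bounds on the interval
  have hDle : ∀ y ∈ Set.Ioo a b, |iteratedDeriv k f y| ≤ A₁ := by
    intro y hy
    rw [← idw_open k hV (hB hy)]
    exact hder_le y (hB hy) k le_rfl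
  have hDge : ∀ y ∈ Set.Ioo a b, A₂ ≤ |iteratedDeriv k f y| := by
    intro y hy
    rw [← idw_open k hV (hB hy)]
    exact hder_ge y (hB hy)
  have hfI : ContDiffOn ℝ k f (Set.Ioo a b) := hf.mono hB
  have hA12 : A₂ ≤ A₁ := le_trans (hDge (x 0) (hxI 0)) (hDle (x 0) (hxI 0))
  have ht1 : (1:ℝ) ≤ A₁/A₂ := (one_le_div hA₂).mpr hA12
  -- step 1
  have hs1 : A₂ * h^k ≤ ((k:ℝ)+1) * (Nat.factorial k : ℝ) * ε :=
    step1 k f a b hfI x hmono hxI ε h A₂ hε hhpos hxf hgap' hDge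
  -- step 2 : bound on S
  set xs : Fin k → ℝ := x ∘ Fin.castSucc with hxs_def
  have hxsmono : StrictMono xs := fun i j hij => hmono (by
    rw [Fin.lt_def] at hij ⊢
    simpa using hij)
  have hxsI : ∀ i, xs i ∈ Set.Ioo a b := fun i => hxI _
  have hxsf : ∀ i, |f (xs i)| < ε := fun i => hxf _
  have hxsgap : ∀ i j : Fin k, i ≠ j → h ≤ |xs i - xs j| := by
    intro i j hij
    refine hgap' _ _ ?_
    simp only [ne_eq, Fin.castSucc_inj]
    exact hij
  have hSb : S ≤ ε * (k:ℝ) * (L/h)^(k-1) + A₁ * L^k / (Nat.factorial k : ℝ) := by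
    have hnn : (0:ℝ) ≤ ε * (k:ℝ) * (L/h)^(k-1) + A₁ * L^k / (Nat.factorial k : ℝ) := by
      positivity
    refine Real.iSup_le (fun y => Real.iSup_le (fun hy => ?_) hnn) hnn
    have := step2 k hk f a b hfI xs hxsmono hxsI ε h A₁ hε hhpos (by rw [← hL_def]; exact hhL)
      hA₁.le hxsf hxsgap hDle y hy
    rw [← hL_def] at this
    exact this
  -- main real inequality
  have hfk : (0:ℝ) < (Nat.factorial k : ℝ) := by positivity
  have key : m^k * S ≤ ((k:ℝ)*((k:ℝ)+1))^k * W * ε * L^k := by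
    have e1 : m^k = (2*(k:ℝ)+2)^k * h^k := by rw [hmh, mul_pow]
    have hk1 : k - 1 + 1 = k := by omega
    have e2 : h^k * (L/h)^(k-1) = h * L^(k-1) := by
      rw [div_pow]
      rw [show h^k = h^(k-1) * h by rw [← pow_succ, hk1]]
      field_simp
    have h2 : h^k * S ≤ ε * (k:ℝ) * (L^(k-1) * h) + A₁ * L^k / (Nat.factorial k : ℝ) * h^k := by
      have := mul_le_mul_of_nonneg_left hSb (by positivity : (0:ℝ) ≤ h^k)
      calc h^k * S ≤ h^k * (ε * (k:ℝ) * (L/h)^(k-1) + A₁ * L^k / (Nat.factorial k : ℝ)) := this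
        _ = ε * (k:ℝ) * (h^k * (L/h)^(k-1)) + A₁ * L^k / (Nat.factorial k : ℝ) * h^k := by ring
        _ = ε * (k:ℝ) * (L^(k-1) * h) + A₁ * L^k / (Nat.factorial k : ℝ) * h^k := by
            rw [e2]; ring
    have h3 : A₁ * L^k / (Nat.factorial k : ℝ) * h^k ≤ (A₁/A₂) * ((k:ℝ)+1) * ε * L^k := by
      have hhk : h^k ≤ ((k:ℝ)+1) * (Nat.factorial k : ℝ) * ε / A₂ := by
        rw [le_div_iff₀ hA₂]
        nlinarith
      calc A₁ * L^k / (Nat.factorial k : ℝ) * h^k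
          ≤ A₁ * L^k / (Nat.factorial k : ℝ) * (((k:ℝ)+1) * (Nat.factorial k : ℝ) * ε / A₂) := by
            refine mul_le_mul_of_nonneg_left hhk (by positivity)
        _ = (A₁/A₂) * ((k:ℝ)+1) * ε * L^k := by field_simp
    have h4 : ε * (k:ℝ) * (L^(k-1) * h) ≤ ε * (k:ℝ) * L^k := by
      refine mul_le_mul_of_nonneg_left ?_ (by positivity)
      calc L^(k-1) * h ≤ L^(k-1) * L := by
            exact mul_le_mul_of_nonneg_left hhL (by positivity)
        _ = L^k := by rw [← pow_succ, hk1]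
    have h5 : h^k * S ≤ ε * L^k * ((k:ℝ) + (A₁/A₂)*((k:ℝ)+1)) := by
      linarith [h2, h3, h4]
    calc m^k * S = (2*(k:ℝ)+2)^k * (h^k * S) := by rw [e1]; ring
      _ ≤ (2*(k:ℝ)+2)^k * (ε * L^k * ((k:ℝ) + (A₁/A₂)*((k:ℝ)+1))) := by
          refine mul_le_mul_of_nonneg_left h5 (by positivity)
      _ = (2*(k:ℝ)+2)^k * ((k:ℝ) + (A₁/A₂)*((k:ℝ)+1)) * (ε * L^k) := by ring
      _ ≤ ((k:ℝ)*((k:ℝ)+1))^k * ((A₁/A₂) * ((k:ℝ)+1) * (2*(k:ℝ)^k+1)) * (ε * L^k) := by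
          refine mul_le_mul_of_nonneg_right (numkR k hk (A₁/A₂) ht1) (by positivity)
      _ = ((k:ℝ)*((k:ℝ)+1))^k * W * ε * L^k := by rw [hW_def]; ring
  -- convert to the rpow form
  obtain ⟨T, hT_def⟩ : ∃ T : ℝ, T = (ε/S) ^ ((1:ℝ)/k) := ⟨_, rfl⟩
  have hTpos : 0 < T := hT_def ▸ Real.rpow_pos_of_pos (by positivity) _
  have hTk : T^k = ε/S := by
    rw [hT_def, ← Real.rpow_natCast ((ε/S) ^ ((1:ℝ)/k)) k, ← Real.rpow_mul (by positivity)]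
    rw [one_div, inv_mul_cancel₀ (by positivity : (k:ℝ) ≠ 0), Real.rpow_one]
  obtain ⟨R, hR_def⟩ : ∃ R : ℝ, R = W ^ ((1:ℝ)/k) := ⟨_, rfl⟩
  have hRpos : 0 < R := hR_def ▸ Real.rpow_pos_of_pos hWpos _
  have hRk : R^k = W := by
    rw [hR_def, ← Real.rpow_natCast (W ^ ((1:ℝ)/k)) k, ← Real.rpow_mul hWpos.le]
    rw [one_div, inv_mul_cancel₀ (by positivity : (k:ℝ) ≠ 0), Real.rpow_one]
  have hfinal : m ≤ ((k:ℝ) * ((k:ℝ)+1) * R) * T * L := by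
    refine le_of_pow_le_pow_left₀ (by omega : k ≠ 0) (by positivity) ?_
    have hexp : (((k:ℝ) * ((k:ℝ)+1) * R) * T * L)^k
        = ((k:ℝ)*((k:ℝ)+1))^k * W * (ε/S) * L^k := by
      rw [mul_pow, mul_pow, mul_pow, hRk, hTk]
    rw [hexp]
    rw [show ((k:ℝ)*((k:ℝ)+1))^k * W * (ε/S) * L^k
        = ((k:ℝ)*((k:ℝ)+1))^k * W * ε * L^k / S by field_simp]
    rw [le_div_iff₀ hSle]
    exact key
  -- ENNReal conversion
  calc volume E = ENNReal.ofReal m := by rw [hm_def, ENNReal.ofReal_toReal hfin]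
    _ ≤ ENNReal.ofReal (((k:ℝ) * ((k:ℝ)+1) * R) * T * L) := ENNReal.ofReal_le_ofReal hfinal
    _ = ENNReal.ofReal ((k:ℝ) * ((k:ℝ)+1) * R) * ENNReal.ofReal T * ENNReal.ofReal L := by
        rw [ENNReal.ofReal_mul (by positivity), ENNReal.ofReal_mul (by positivity)]
    _ = _ := by
        rw [hR_def, hW_def, hT_def, hL_def,
          ← ENNReal.ofReal_rpow_of_nonneg (by positivity : (0:ℝ) ≤ ε/S) (by positivity),
          ENNReal.ofReal_div_of_pos hSle, Real.volume_Ioo]
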